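/- Let n ≥ 1, let V ⊂ ℝⁿ be a hyperplane (a linear subspace of dimension n−1), and let u, v₁, …, vₙ ∈ ℝⁿ be vectors all lying in the same connected component of ℝⁿ ∖ V. Suppose that v₁, …, vₙ are linearly independent and that u does not belong to the convex cone {a₁v₁ + ⋯ + aₙvₙ : a₁, …, aₙ ≥ 0}. Then there is no positive definite symmetric bilinear form ⟨·,·⟩ on ℝⁿ such that ⟨u, x⟩ = 0 for all x ∈ V and ⟨vᵢ, vⱼ⟩ = 0 for all i ≠ j. -/

import Mathlib

/-- Let `V ⊂ ℝⁿ` be a hyperplane and let `u, v₁, …, vₙ` lie in the same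
connected component of `ℝⁿ ∖ V` (expressed via a linear functional `f` with kernel `V` that is
positive on all of them).  If `v₁, …, vₙ` are linearly independent and `u` is not in the convex
cone spanned by them, then there is no positive definite symmetric bilinear form for which
`u ⟂ V` and the `vᵢ` are mutually orthogonal. -/
theorem no_inner_product_orthogonalizing (n : ℕ) (hn : 1 ≤ n)
    (V : Submodule ℝ (Fin n → ℝ)) (hV : Module.finrank ℝ V = n - 1)
    (u : Fin n → ℝ) (v : Fin n → (Fin n → ℝ))
    (f : (Fin n → ℝ) →ₗ[ℝ] ℝ) (hf : f ≠ 0) (hker : LinearMap.ker f = V)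
    (hu : 0 < f u) (hvpos : ∀ i, 0 < f (v i))
    (hind : LinearIndependent ℝ v)
    (hcone : ¬ ∃ a : Fin n → ℝ, (∀ i, 0 ≤ a i) ∧ u = ∑ i, a i • v i) :
    ¬ ∃ B : LinearMap.BilinForm ℝ (Fin n → ℝ),
        (∀ x y, B x y = B y x) ∧ (∀ x, x ≠ 0 → 0 < B x x) ∧
        (∀ x ∈ V, B u x = 0) ∧
        (∀ i j, i ≠ j → B (v i) (v j) = 0) := by
  rintro ⟨B, hsymm, hpos, huV, horth⟩
  have : Nonempty (Fin n) := ⟨⟨0, hn⟩⟩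
  -- v is a basis of ℝⁿ
  have hcard : Fintype.card (Fin n) = Module.finrank ℝ (Fin n → ℝ) := by simp
  let b : Module.Basis (Fin n) ℝ (Fin n → ℝ) := basisOfLinearIndependentOfCardEqFinrank hind hcard
  have hb : ∀ i, b i = v i := fun i =>
    coe_basisOfLinearIndependentOfCardEqFinrank hind hcard ▸ rfl
  set a : Fin n → ℝ := fun i => b.repr u i with ha
  have hrep : u = ∑ i, a i • v i := by
    conv_lhs => rw [← b.sum_repr u]
    exact Finset.sum_congr rfl fun i _ => by rw [hb]
  -- some coefficient is negative
  obtain ⟨j, hj⟩ : ∃ j, a j < 0 := by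
    by_contra h
    push_neg at h
    exact hcone ⟨a, fun i => h i, hrep⟩
  -- B u (v j) = a j * B (v j) (v j) < 0
  have hBuvj : B u (v j) = a j * B (v j) (v j) := by
    rw [hrep]
    have : B (∑ i, a i • v i) (v j) = ∑ i, a i * B (v i) (v j) := by
      simp [map_sum, LinearMap.sum_apply, map_smul, smul_eq_mul]
    rw [this, Finset.sum_eq_single j]
    · intro i _ hij; rw [horth i j hij, mul_zero]
    · intro h; exact absurd (Finset.mem_univ j) h
  have hvj0 : v j ≠ 0 := by
    intro h; have := hvpos j; rw [h, map_zero] at this; exact lt_irrefl 0 this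
  have hu0 : u ≠ 0 := by
    intro h; rw [h, map_zero] at hu; exact lt_irrefl 0 hu
  have hneg : B u (v j) < 0 :=
    hBuvj ▸ mul_neg_of_neg_of_pos hj (hpos (v j) hvj0)
  -- w = f(v j) • u - f u • v j ∈ V
  have hwV : (f (v j)) • u - (f u) • v j ∈ V := by
    rw [← hker, LinearMap.mem_ker]
    simp [mul_comm]
  have := huV _ hwV
  rw [map_sub, map_smul, map_smul] at this
  have hBuu : 0 < B u u := hpos u hu0
  have : f (v j) * B u u = f u * B u (v j) := by
    have h := this
    simp only [smul_eq_mul] at h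
    linarith
  nlinarith [hvpos j, hu, hBuu, hneg]
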